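/- Let π be a permutation of {1,...,r} with π(1) = 1, and suppose π has no 'marked point', i.e. π(i+1) ≠ π(i) + 1 for all i = 1,...,r (indices cyclically, with π(r+1) := π(1)). If the restriction of π to {2,...,r} is reducible, i.e. there exists 2 ≤ i₀ < r with π({2,...,i₀}) = {2,...,i₀}, then the cyclic rotation procedure described (moving the block after the invariant set to the front) produces a permutation π₁ cyclically equivalent to π whose minimal invariant initial segment, if it exists, is strictly larger; hence after finitely many rotations one obtains a cyclically equivalent permutation π' with π'(1)=1 whose restriction to {2,...,r} has no invariant initial segment {2,...,i₀} for any 2 ≤ i₀ < r. -/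

import Mathlib

open Fin.NatCast Fin.CommRing

/-- Combinatorial core of the "simple cylinder" theorem for Abelian
differentials (0-based indices on `Fin r`, cyclic addition): let `π` be a
permutation of `Fin r` with `π 0 = 0` and no marked point, i.e.
`π (i+1) ≠ π i + 1` for every `i` (cyclically).  Then there is a cyclically
equivalent permutation `π'` (obtained by rotating the two rows:
`π' i = π (i + c) + d`) with `π' 0 = 0` whose restriction to
`{1,…,r-1}` has no invariant initial segment `{1,…,i₀}` with
`1 ≤ i₀ < r - 1`. -/
theorem exists_irreducible_cyclic_representative
    (r : ℕ) [NeZero r] (hr : 2 ≤ r) (π : Equiv.Perm (Fin r))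
    (hfix : π 0 = 0)
    (hnomark : ∀ i : Fin r, π (i + 1) ≠ π i + 1) :
    ∃ (π' : Equiv.Perm (Fin r)) (c d : Fin r),
      (∀ i, π' i = π (i + c) + d) ∧
      π' 0 = 0 ∧
      ¬ ∃ i0 : ℕ, 1 ≤ i0 ∧ i0 + 1 < r ∧
        ∀ j : Fin r, 1 ≤ j.val → j.val ≤ i0 →
          (1 ≤ (π' j).val ∧ (π' j).val ≤ i0) := by
  classical
  by_contra hcon
  push_neg at hcon
  -- Every rotation fixing 0 admits a "good" initial interval.
  have H : ∀ c : Fin r, ∃ ℓ : ℕ, 2 ≤ ℓ ∧ ℓ < r ∧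
      ∀ t : ℕ, t < ℓ → (π (c + (t : Fin r)) - π c).val < ℓ := by
    intro c
    set d : Fin r := - π c with hd
    set π' : Equiv.Perm (Fin r) :=
      (Equiv.addRight c).trans (π.trans (Equiv.addRight d)) with hπ'
    have hπ'app : ∀ i, π' i = π (i + c) + d := fun i => rfl
    have h0 : π' 0 = 0 := by
      rw [hπ'app 0, hd]; simp
    obtain ⟨i0, hi1, hi2, hinv⟩ := hcon π' c d hπ'app h0
    refine ⟨i0 + 1, by omega, by omega, ?_⟩
    intro t ht
    have htr : t < r := by omega
    have hval : ((t : Fin r)).val = t := Fin.val_cast_of_lt htr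
    rcases Nat.eq_zero_or_pos t with h | h
    · subst h; simp
    · obtain ⟨h1, h2⟩ := hinv (t : Fin r) (by rw [hval]; omega)
        (by rw [hval]; omega)
      have he : π (c + (t : Fin r)) - π c = π' (t : Fin r) := by
        rw [hπ'app, hd, add_comm c]; ring
      rw [he]; omega
  -- Take minimal good length over all rotations.
  have hQex : ∃ ℓ : ℕ, ∃ c : Fin r, 2 ≤ ℓ ∧ ℓ < r ∧
      ∀ t : ℕ, t < ℓ → (π (c + (t : Fin r)) - π c).val < ℓ := by
    obtain ⟨ℓ, h1, h2, h3⟩ := H 0; exact ⟨ℓ, 0, h1, h2, h3⟩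
  obtain ⟨c₀, hℓ2, hℓr, G⟩ := Nat.find_spec hQex
  set ℓ := Nat.find hQex with hℓdef
  obtain ⟨ℓ', hℓ'2, hℓ'r, G'⟩ := H (c₀ + 1)
  have hℓℓ' : ℓ ≤ ℓ' := Nat.find_min' hQex ⟨c₀ + 1, hℓ'2, hℓ'r, G'⟩
  -- v := displacement of c₀+1
  set v : ℕ := (π (c₀ + 1) - π c₀).val with hv
  have hcast : π (c₀ + 1) - π c₀ = ((v : ℕ) : Fin r) := by
    rw [hv, Fin.cast_val_eq_self]
  have hπc1 : π (c₀ + 1) = π c₀ + ((v : ℕ) : Fin r) := by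
    rw [← hcast]; ring
  have hvℓ : v < ℓ := by
    have h1 := G 1 (by omega)
    rwa [Nat.cast_one] at h1
  have hone : (1 : Fin r).val = 1 := by
    rw [← Nat.cast_one, Fin.val_cast_of_lt (by omega : 1 < r)]
  have hvne0 : v ≠ 0 := by
    intro h
    rw [h] at hπc1
    simp only [Nat.cast_zero, add_zero] at hπc1
    have h2 : c₀ + 1 = c₀ := π.injective hπc1
    have h3 : c₀ + 1 = c₀ + 0 := by rw [add_zero]; exact h2
    have h4 : (1 : Fin r) = 0 := add_left_cancel h3
    have h5 := congrArg Fin.val h4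
    rw [hone] at h5
    simp at h5
  have hvne1 : v ≠ 1 := by
    intro h
    rw [h, Nat.cast_one] at hπc1
    exact hnomark c₀ hπc1
  have hv2 : 2 ≤ v := by omega
  -- the displacement map is a bijection of Fin ℓ
  have hsurj : ∀ w : Fin ℓ, ∃ t : Fin ℓ,
      (π (c₀ + (t.val : Fin r)) - π c₀).val = w.val := by
    have hinj : Function.Injective
        (fun t : Fin ℓ => (⟨(π (c₀ + (t.val : Fin r)) - π c₀).val,
          G t.val t.isLt⟩ : Fin ℓ)) := by
      intro t₁ t₂ h
      simp only [Fin.mk.injEq] at h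
      have hval : (π (c₀ + (t₁.val : Fin r)) - π c₀).val
          = (π (c₀ + (t₂.val : Fin r)) - π c₀).val := h
      have h' : (π (c₀ + (t₁.val : Fin r)) - π c₀) =
          (π (c₀ + (t₂.val : Fin r)) - π c₀) := Fin.ext hval
      have h'' : π (c₀ + (t₁.val : Fin r)) = π (c₀ + (t₂.val : Fin r)) :=
        sub_left_injective h'
      have h3 : c₀ + (t₁.val : Fin r) = c₀ + (t₂.val : Fin r) := π.injective h''
      have h4 : ((t₁.val : Fin r)) = ((t₂.val : Fin r)) := add_left_cancel h3
      have h5 : t₁.val = t₂.val := by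
        have h6 := congrArg Fin.val h4
        rwa [Fin.val_cast_of_lt (lt_trans t₁.isLt hℓr),
          Fin.val_cast_of_lt (lt_trans t₂.isLt hℓr)] at h6
      exact Fin.ext h5
    have hsur := Finite.surjective_of_injective hinj
    intro w
    obtain ⟨t, ht⟩ := hsur w
    exact ⟨t, congrArg Fin.val ht⟩
  obtain ⟨t, ht⟩ := hsurj ⟨v - 1, by omega⟩
  have htne0 : t.val ≠ 0 := by
    intro h
    rw [h] at ht
    simp at ht
    omega
  -- key identities
  have hπct : π (c₀ + (t.val : Fin r)) = π c₀ + ((v - 1 : ℕ) : Fin r) := by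
    have h1 : π (c₀ + (t.val : Fin r)) - π c₀ = ((v - 1 : ℕ) : Fin r) := by
      apply Fin.ext
      rw [Fin.val_cast_of_lt (by omega : v - 1 < r)]
      exact ht
    rw [sub_eq_iff_eq_add] at h1; rw [h1, add_comm]
  -- apply G' at t-1
  have htℓ' : t.val - 1 < ℓ' := by have := t.isLt; omega
  have hG' := G' (t.val - 1) htℓ'
  have hdom : (c₀ + 1) + ((t.val - 1 : ℕ) : Fin r) = c₀ + (t.val : Fin r) := by
    rw [Nat.cast_sub (by omega : 1 ≤ t.val), Nat.cast_one]
    ring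
  rw [hdom, hπct, hπc1] at hG'
  have hr0 : ((r : ℕ) : Fin r) = 0 := Fin.natCast_self r
  have hdiff : (π c₀ + ((v - 1 : ℕ) : Fin r)) - (π c₀ + ((v : ℕ) : Fin r))
      = ((r - 1 : ℕ) : Fin r) := by
    rw [Nat.cast_sub (by omega : 1 ≤ v), Nat.cast_sub (by omega : 1 ≤ r),
      Nat.cast_one, hr0]
    ring
  rw [hdiff, Fin.val_cast_of_lt (by omega : r - 1 < r)] at hG'
  omega
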